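/- Let ρ1 = (1/7, 2/7, 4/7), ρ2 = (2/7, 4/7, 1/7), ρ3 = (4/7, 1/7, 2/7) in ℚ³, and let L be the ℤ-submodule of ℚ³ generated by the standard basis vectors e1, e2, e3 together with ρ1, ρ2, ρ3. Then there exists a ℤ-module isomorphism φ from L onto ℤ³ satisfying φ(ρ1) = (0, 0, 1), φ(ρ2) = (0, −1, 1), φ(ρ3) = (1, 0, 1); moreover this φ satisfies φ(e3) = (0, 1, 1) and φ(e2) = (−1, −2, 1). (These are the ray generators ρ'1, ..., ρ'5 of the fan of the total space of the line bundle O_{F2}(D) over the Hirzebruch surface F2, so the lattice isomorphism matches the subfan Σ1 of the resolution with the fan of O_{F2}(D).) -/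

import Mathlib

/-- `ρ1 = (1/7, 2/7, 4/7)`. -/
def ρ1 : Fin 3 → ℚ := ![1/7, 2/7, 4/7]
/-- `ρ2 = (2/7, 4/7, 1/7)`. -/
def ρ2 : Fin 3 → ℚ := ![2/7, 4/7, 1/7]
/-- `ρ3 = (4/7, 1/7, 2/7)`. -/
def ρ3 : Fin 3 → ℚ := ![4/7, 1/7, 2/7]

/-- The standard basis vectors `e1, e2, e3` of `ℚ³`. -/
def e : Fin 3 → (Fin 3 → ℚ) := fun i => Pi.single i 1

/-- The lattice `L ⊂ ℚ³` generated by `e1, e2, e3, ρ1, ρ2, ρ3`. -/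
def L : Submodule ℤ (Fin 3 → ℚ) :=
  Submodule.span ℤ {e 0, e 1, e 2, ρ1, ρ2, ρ3}

/-- A `ℤ`-basis of `L`: `ρ1, ρ3, e3`. -/
def v : Fin 3 → (Fin 3 → ℚ) := ![ρ1, ρ3, e 2]
/-- The target `ℤ`-basis of `ℤ³`. -/
def w : Fin 3 → (Fin 3 → ℤ) := ![![0,0,1], ![1,0,1], ![0,1,1]]

lemma hv_indep : LinearIndependent ℤ v := by
  rw [Fintype.linearIndependent_iff]
  intro g hg
  have h0 := congrFun hg 0
  have h1 := congrFun hg 1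
  have h2 := congrFun hg 2
  simp [Fin.sum_univ_three, v, ρ1, ρ3, e, Pi.single] at h0 h1 h2
  have e0 : (g 0 : ℚ) + 4 * g 1 = 0 := by linarith
  have e1 : 2 * (g 0 : ℚ) + g 1 = 0 := by linarith
  have e2 : 4 * (g 0 : ℚ) + 2 * g 1 + 7 * g 2 = 0 := by linarith
  have i0 : g 0 + 4 * g 1 = 0 := by exact_mod_cast e0
  have i1 : 2 * g 0 + g 1 = 0 := by exact_mod_cast e1
  have i2 : 4 * g 0 + 2 * g 1 + 7 * g 2 = 0 := by exact_mod_cast e2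
  intro i; fin_cases i <;> simp <;> omega

lemma hw_indep : LinearIndependent ℤ w := by
  rw [Fintype.linearIndependent_iff]
  intro g hg
  have h0 := congrFun hg 0
  have h1 := congrFun hg 1
  have h2 := congrFun hg 2
  simp [Fin.sum_univ_three, w] at h0 h1 h2
  intro i; fin_cases i <;> simp <;> omega

lemma hw_span : ⊤ ≤ Submodule.span ℤ (Set.range w) := by
  intro x _
  rw [Submodule.mem_span_range_iff_exists_fun]
  refine ⟨![x 2 - x 0 - x 1, x 0, x 1], ?_⟩
  funext i
  fin_cases i <;> simp [Fin.sum_univ_three, w] <;> ring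

lemma comb_e0 : e 0 = (-1 : ℤ) • v 0 + (2 : ℤ) • v 1 := by
  funext i; fin_cases i <;> simp [v, ρ1, ρ3, e, Pi.single] <;> norm_num
lemma comb_e1 : e 1 = (4 : ℤ) • v 0 + (-1 : ℤ) • v 1 + (-2 : ℤ) • v 2 := by
  funext i; fin_cases i <;> simp [v, ρ1, ρ3, e, Pi.single] <;> norm_num
lemma comb_r2 : ρ2 = (2 : ℤ) • v 0 + (-1 : ℤ) • v 2 := by
  funext i; fin_cases i <;> simp [v, ρ1, ρ2, ρ3, e, Pi.single] <;> norm_num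

lemma hspan : L = Submodule.span ℤ (Set.range v) := by
  apply le_antisymm
  · rw [L, Submodule.span_le]
    intro x hx
    have m0 : v 0 ∈ Submodule.span ℤ (Set.range v) :=
      Submodule.subset_span ⟨0, rfl⟩
    have m1 : v 1 ∈ Submodule.span ℤ (Set.range v) :=
      Submodule.subset_span ⟨1, rfl⟩
    have m2 : v 2 ∈ Submodule.span ℤ (Set.range v) :=
      Submodule.subset_span ⟨2, rfl⟩
    simp only [Set.mem_insert_iff, Set.mem_singleton_iff] at hx
    rcases hx with h | h | h | h | h | h <;> subst h
    · rw [comb_e0]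
      exact Submodule.add_mem _ (Submodule.smul_mem _ _ m0) (Submodule.smul_mem _ _ m1)
    · rw [comb_e1]
      exact Submodule.add_mem _ (Submodule.add_mem _ (Submodule.smul_mem _ _ m0)
        (Submodule.smul_mem _ _ m1)) (Submodule.smul_mem _ _ m2)
    · exact m2
    · exact m0
    · rw [comb_r2]
      exact Submodule.add_mem _ (Submodule.smul_mem _ _ m0) (Submodule.smul_mem _ _ m2)
    · exact m1
  · rw [Submodule.span_le]
    rintro x ⟨i, rfl⟩
    fin_cases i
    · exact Submodule.subset_span (by simp [v])
    · exact Submodule.subset_span (by simp [v])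
    · exact Submodule.subset_span (by simp [v])

noncomputable def bL : Module.Basis (Fin 3) ℤ (Submodule.span ℤ (Set.range v)) :=
  Module.Basis.span hv_indep

noncomputable def bW : Module.Basis (Fin 3) ℤ (Fin 3 → ℤ) := Module.Basis.mk hw_indep hw_span

noncomputable def φ₀ : L ≃ₗ[ℤ] (Fin 3 → ℤ) :=
  (LinearEquiv.ofEq L _ hspan).trans (bL.equiv bW (Equiv.refl _))

lemma key (x : L) (c : Fin 3 → ℤ) (hx : (x : Fin 3 → ℚ) = ∑ i, c i • v i) :
    φ₀ x = ∑ i, c i • w i := by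
  have hx2 : (LinearEquiv.ofEq L _ hspan) x = ∑ i, c i • bL i := by
    apply Subtype.ext
    push_cast [bL, Module.Basis.span_apply]
    exact hx
  rw [φ₀, LinearEquiv.trans_apply, hx2, map_sum]
  simp [Module.Basis.equiv_apply, bW, Module.Basis.mk_apply]

/-- There is a `ℤ`-module isomorphism `φ : L ≃ ℤ³` with `φ(ρ1) = (0,0,1)`,
`φ(ρ2) = (0,−1,1)`, `φ(ρ3) = (1,0,1)`, `φ(e3) = (0,1,1)`, `φ(e2) = (−1,−2,1)`:
the lattice isomorphism matching the subfan `Σ₁` of the resolution with the fan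
of the line bundle `O_{F₂}(D)` over the Hirzebruch surface `F₂`. -/
theorem stmt_11 (h1 : ρ1 ∈ L) (h2 : ρ2 ∈ L) (h3 : ρ3 ∈ L)
    (he2 : e 1 ∈ L) (he3 : e 2 ∈ L) :
    ∃ φ : L ≃ₗ[ℤ] (Fin 3 → ℤ),
      φ ⟨ρ1, h1⟩ = ![0, 0, 1] ∧
      φ ⟨ρ2, h2⟩ = ![0, -1, 1] ∧
      φ ⟨ρ3, h3⟩ = ![1, 0, 1] ∧
      φ ⟨e 2, he3⟩ = ![0, 1, 1] ∧
      φ ⟨e 1, he2⟩ = ![-1, -2, 1] := by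
  refine ⟨φ₀, ?_, ?_, ?_, ?_, ?_⟩
  · rw [key ⟨ρ1, h1⟩ ![1, 0, 0] (by funext i; fin_cases i <;> simp [Fin.sum_univ_three, v, ρ1, ρ2, ρ3, e, Pi.single] <;> norm_num)]
    funext i; fin_cases i <;> simp [Fin.sum_univ_three, w]
  · rw [key ⟨ρ2, h2⟩ ![2, 0, -1] (by funext i; fin_cases i <;> simp [Fin.sum_univ_three, v, ρ1, ρ2, ρ3, e, Pi.single] <;> norm_num)]
    funext i; fin_cases i <;> simp [Fin.sum_univ_three, w]
  · rw [key ⟨ρ3, h3⟩ ![0, 1, 0] (by funext i; fin_cases i <;> simp [Fin.sum_univ_three, v, ρ1, ρ2, ρ3, e, Pi.single] <;> norm_num)]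
    funext i; fin_cases i <;> simp [Fin.sum_univ_three, w]
  · rw [key ⟨e 2, he3⟩ ![0, 0, 1] (by funext i; fin_cases i <;> simp [Fin.sum_univ_three, v, ρ1, ρ2, ρ3, e, Pi.single] <;> norm_num)]
    funext i; fin_cases i <;> simp [Fin.sum_univ_three, w]
  · rw [key ⟨e 1, he2⟩ ![4, -1, -2] (by funext i; fin_cases i <;> simp [Fin.sum_univ_three, v, ρ1, ρ2, ρ3, e, Pi.single] <;> norm_num)]
    funext i; fin_cases i <;> simp [Fin.sum_univ_three, w]
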